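/- Let K be a field, σ an automorphism of K of order n, and f(t) = t^m − Σ a_i t^i ∈ K[t;σ] monic with m = qc + r, 0 ≤ r < c, where n = bc. If [Nuc(S_f) : F] = c (F = Fix(σ)), then every nonzero coefficient index λ of f satisfies λ ≡ r (mod c); consequently f(t) = g(t^c) t^r for some polynomial g of degree q in K[t^c; σ^c]. -/

import Mathlib

open Polynomial

/-- Skew (twisted) multiplication on polynomials over `K`, representing the
multiplication of the twisted polynomial ring `K[t;σ]` with `t·a = σ(a)·t`:
`(a t^i)·(b t^j) = a σ^i(b) t^{i+j}`. -/
noncomputable def sMul {K : Type} [Field K] (σ : K ≃+* K) (p q : K[X]) : K[X] :=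
  p.sum fun i a => C a * (q.map ((σ ^ i : K ≃+* K) : K →+* K)) * X ^ i

/-- `f` is right invariant in `K[t;σ]`: `f·g ∈ R·f` for all `g`. -/
def RightInvariant {K : Type} [Field K] (σ : K ≃+* K) (f : K[X]) : Prop :=
  ∀ g : K[X], ∃ q : K[X], sMul σ f g = sMul σ q f

/-- Membership in the eigenring of `f`, i.e. the right nucleus of the Petit
algebra `S_f = K[t;σ]/K[t;σ]f` (for `f` not right invariant):
`{g | deg g < deg f ∧ f·g ∈ R·f}`. -/
def InEigenring {K : Type} [Field K] (σ : K ≃+* K) (f g : K[X]) : Prop :=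
  g.degree < f.degree ∧ ∃ q : K[X], sMul σ f g = sMul σ q f

/-- Remainder of right division by `f` in `K[t;σ]` (Petit multiplication in
`S_f` is `g ∘ h = (g·h) mod_r f`). -/
noncomputable def modRight {K : Type} [Field K] (σ : K ≃+* K) (f g : K[X]) : K[X] := by
  classical
  exact if h : ∃ r : K[X], r.degree < f.degree ∧ ∃ q : K[X], g = sMul σ q f + r
    then h.choose else 0

/-- Theorem 3.5: let `K/F` be cyclic Galois of degree `n = b·c` with Galois group
`⟨σ⟩`, and `f(t) = t^m - Σ a_i t^i ∈ K[t;σ]` monic, not right invariant, with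
`m = q·c + r`, `0 ≤ r < c`. If `[Nuc(S_f) : F] = c`, then every nonzero coefficient
index `λ` of `f` satisfies `λ ≡ r (mod c)`; consequently `f(t) = g(t^c)·t^r` for a
polynomial `g` of degree `q` in `K[t^c;σ^c]`. -/
theorem coeff_indices_congr (F K : Type) [Field F] [Field K] [Algebra F K]
    [IsGalois F K] [FiniteDimensional F K] [DecidableEq K]
    (n : ℕ) (hn : Module.finrank F K = n)
    (σ : K ≃ₐ[F] K) (hgen : ∀ τ : K ≃ₐ[F] K, τ ∈ Subgroup.zpowers σ)
    (σr : K ≃+* K) (hσr : ∀ x, σr x = σ x)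
    (b c : ℕ) (hc : 0 < c) (hbc : n = b * c)
    (m : ℕ) (hm : 2 ≤ m) (a : ℕ → K) (f : K[X])
    (hf : f = X ^ m - ∑ i ∈ Finset.range m, C (a i) * X ^ i)
    (hri : ¬ RightInvariant σr f)
    (q r : ℕ) (hq : 0 < q) (hr : r < c) (hqr : m = q * c + r)
    (d : ℕ)
    (hd : d = Nat.gcd
      (Finset.gcd ((Finset.range m).filter fun i => a i ≠ 0) fun i => m - i) n)
    (hL : Module.finrank F
      (IntermediateField.fixedField (Subgroup.zpowers (σ ^ d))) = c) :
    (∀ i < m, a i ≠ 0 → i % c = r) ∧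
      ∃ bc : ℕ → K, bc q = 1 ∧
        f = ∑ l ∈ Finset.range (q + 1), C (bc l) * X ^ (l * c + r) := by
  classical
  have hnpos : 0 < n := hn ▸ Module.finrank_pos
  have hdn : d ∣ n := hd ▸ Nat.gcd_dvd_right _ _
  have hdpos : 0 < d := Nat.pos_of_dvd_of_pos hdn hnpos
  -- Step 1: d = c from Galois theory
  have horder : orderOf σ = n := by
    rw [orderOf_eq_card_of_forall_mem_zpowers hgen,
      IsGalois.card_aut_eq_finrank, hn]
  have hod : orderOf (σ ^ d) = n / d := by
    rw [orderOf_pow, horder, Nat.gcd_eq_right hdn]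
  have hcardz : Fintype.card (Subgroup.zpowers (σ ^ d)) = n / d := by
    rw [← Nat.card_eq_fintype_card, Nat.card_zpowers, hod]
  have hmul := Module.finrank_mul_finrank F
    (IntermediateField.fixedField (Subgroup.zpowers (σ ^ d))) K
  rw [IntermediateField.finrank_fixedField_eq_card, Nat.card_zpowers, hod, hL, hn] at hmul
  have hdiv : 0 < n / d := Nat.div_pos (Nat.le_of_dvd hnpos hdn) hdpos
  have hmc : d * (n / d) = n := Nat.mul_div_cancel' hdn
  have hdc : d = c := Nat.eq_of_mul_eq_mul_right hdiv (by omega)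
  -- Step 2: every nonzero coefficient index is ≡ r (mod c)
  have h1 : ∀ i < m, a i ≠ 0 → i % c = r := by
    intro i him hai
    have hmem : i ∈ (Finset.range m).filter fun j => a j ≠ 0 := by
      simp [Finset.mem_filter, Finset.mem_range, him, hai]
    have hgdvd : (Finset.gcd ((Finset.range m).filter fun j => a j ≠ 0)
        fun j => m - j) ∣ m - i := Finset.gcd_dvd hmem
    have hcdvd : c ∣ m - i := hdc ▸ (hd ▸ (Nat.gcd_dvd_left _ _)).trans hgdvd
    obtain ⟨k, hk⟩ := hcdvd
    have hckm : c * k ≤ m := hk ▸ Nat.sub_le m i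
    have hlt : c * k < c * (q + 1) := by
      have e0 : c * (q + 1) = q * c + c := by ring
      omega
    have hkq : k ≤ q := Nat.lt_succ_iff.mp (Nat.lt_of_mul_lt_mul_left hlt)
    have hieq : i = (q - k) * c + r := by
      have e1 : c * k = k * c := Nat.mul_comm c k
      have e2 : (q - k) * c = q * c - k * c := Nat.sub_mul q k c
      have e3 : k * c ≤ q * c := Nat.mul_le_mul_right c hkq
      omega
    rw [hieq, Nat.add_comm, Nat.add_mul_mod_self_right, Nat.mod_eq_of_lt hr]
  refine ⟨h1, fun l => if l = q then 1 else -(a (l * c + r)), by simp, ?_⟩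
  -- Step 3: rewrite f as the claimed sum
  rw [hf, Finset.sum_range_succ]
  have hinj : ∀ x ∈ Finset.range q, ∀ y ∈ Finset.range q,
      x * c + r = y * c + r → x = y := fun x _ y _ h =>
    Nat.eq_of_mul_eq_mul_right hc (by omega)
  have hsum : (∑ i ∈ Finset.range m, C (a i) * X ^ i)
      = ∑ l ∈ Finset.range q, C (a (l * c + r)) * X ^ (l * c + r) := by
    rw [show (∑ l ∈ Finset.range q, C (a (l * c + r)) * X ^ (l * c + r))
        = ∑ i ∈ (Finset.range q).image (fun l => l * c + r), C (a i) * X ^ i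
      from (Finset.sum_image (f := fun i => C (a i) * X ^ i) hinj).symm]
    refine (Finset.sum_subset ?_ ?_).symm
    · intro i hi
      simp only [Finset.mem_image, Finset.mem_range] at hi ⊢
      obtain ⟨l, hl, rfl⟩ := hi
      have h2 : (l + 1) * c ≤ q * c := Nat.mul_le_mul_right c hl
      have h3 : (l + 1) * c = l * c + c := by ring
      omega
    · intro i hi hni
      simp only [Finset.mem_image, Finset.mem_range] at hi hni
      have hai : a i = 0 := by
        by_contra hai
        have hmod := h1 i hi hai
        have hdm := Nat.div_add_mod i c
        rw [hmod] at hdm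
        have e1 : c * (i / c) = i / c * c := Nat.mul_comm c (i / c)
        have hieq : i / c * c + r = i := by omega
        have hltq : i / c < q := by
          refine Nat.lt_of_mul_lt_mul_right (a := c) ?_
          omega
        exact hni ⟨i / c, hltq, hieq⟩
      simp [hai]
  rw [hsum]
  have hql : ∀ l ∈ Finset.range q,
      C (if l = q then (1:K) else -(a (l * c + r))) * X ^ (l * c + r)
        = -(C (a (l * c + r)) * X ^ (l * c + r)) := by
    intro l hl
    have : l ≠ q := by simp at hl; omega
    simp [this]
  rw [Finset.sum_congr rfl hql, Finset.sum_neg_distrib, ← hqr]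
  simp only [if_pos rfl, if_true, map_one, one_mul]
  ring
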